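/- Let R be a commutative ring and G a finite group, and let A = MonoidAlgebra R G be the group algebra. Define λ : A →ₗ[R] R by λ(x) = x(1), the coefficient of x at the identity element of G. Then λ(x * y) = λ(y * x) for all x, y ∈ A, and the map A → Hom_R(A, R) sending x to the functional y ↦ λ(x * y) is bijective. In particular, the group algebra of a finite group is a symmetric algebra relative to R. -/

import Mathlib

/-- For a finite group `G` and a commutative ring `R`, the group algebra
`A = MonoidAlgebra R G` is a symmetric algebra relative to `R`: the functional
`λ : A →ₗ[R] R`, `λ x = x 1` (the coefficient at the identity of `G`), satisfies
`λ (x * y) = λ (y * x)`, and `x ↦ (y ↦ λ (x * y))` is a bijection from `A` onto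
`Hom_R(A, R)`. -/
theorem stmt9 (R : Type*) [CommRing R] (G : Type*) [Group G] [Finite G] :
    (∀ x y : MonoidAlgebra R G, (x * y).coeff 1 = (y * x).coeff 1) ∧
    Function.Bijective (fun x : MonoidAlgebra R G =>
      ((Finsupp.lapply (1 : G)).comp ((MonoidAlgebra.coeffLinearEquiv R).toLinearMap.comp (LinearMap.mulLeft R x)) :
        MonoidAlgebra R G →ₗ[R] R)) := by
  have := Fintype.ofFinite G
  classical
  constructor
  · intro x y
    induction x using MonoidAlgebra.induction_linear with
    | zero => simp
    | add f g hf hg => rw [add_mul, mul_add, MonoidAlgebra.coeff_add, MonoidAlgebra.coeff_add, Finsupp.add_apply, Finsupp.add_apply, hf, hg]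
    | single a r =>
      induction y using MonoidAlgebra.induction_linear with
      | zero => simp
      | add f g hf hg => rw [add_mul, mul_add, MonoidAlgebra.coeff_add, MonoidAlgebra.coeff_add, Finsupp.add_apply, Finsupp.add_apply, hf, hg]
      | single b s =>
        rw [MonoidAlgebra.single_mul_single, MonoidAlgebra.single_mul_single]
        rw [show (MonoidAlgebra.single (a * b) (r * s)).coeff 1
            = if a * b = 1 then r * s else 0 from Finsupp.single_apply,
          show (MonoidAlgebra.single (b * a) (s * r)).coeff 1
            = if b * a = 1 then s * r else 0 from Finsupp.single_apply]
        by_cases h : a * b = 1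
        · have h' : b * a = 1 := by
            rw [show b = a⁻¹ from eq_inv_of_mul_eq_one_right h]; simp
          rw [if_pos h, if_pos h', mul_comm]
        · have h' : b * a ≠ 1 := fun hc =>
            h (by rw [show a = b⁻¹ from eq_inv_of_mul_eq_one_right hc]; simp)
          rw [if_neg h, if_neg h']
  · set Φ := fun x : MonoidAlgebra R G =>
      ((Finsupp.lapply (1 : G)).comp ((MonoidAlgebra.coeffLinearEquiv R).toLinearMap.comp (LinearMap.mulLeft R x)) :
        MonoidAlgebra R G →ₗ[R] R) with hΦ
    have key : ∀ (x : MonoidAlgebra R G) (g : G), Φ x (MonoidAlgebra.single g⁻¹ 1) = x.coeff g := by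
      intro x g
      show ((x * MonoidAlgebra.single g⁻¹ 1 : MonoidAlgebra R G)).coeff 1 = x.coeff g
      rw [MonoidAlgebra.coeff_mul_single_apply]
      simp
    constructor
    · intro x y hxy
      ext g
      rw [← key x g, ← key y g, hxy]
    · intro f
      refine ⟨∑ g : G, MonoidAlgebra.single g (f (MonoidAlgebra.single g⁻¹ 1)), ?_⟩
      refine LinearMap.ext fun y => ?_
      show ((∑ g : G, MonoidAlgebra.single g (f (MonoidAlgebra.single g⁻¹ 1))) * y).coeff 1 = f y
      rw [Finset.sum_mul, MonoidAlgebra.coeff_sum, Finsupp.finset_sum_apply]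
      have step : ∀ g : G, (MonoidAlgebra.single g (f (MonoidAlgebra.single g⁻¹ 1)) * y).coeff 1
          = f (MonoidAlgebra.single g⁻¹ (y.coeff g⁻¹)) := by
        intro g
        rw [MonoidAlgebra.coeff_single_mul_apply,
          show (MonoidAlgebra.single g⁻¹ (y.coeff g⁻¹) : MonoidAlgebra R G)
              = (y.coeff g⁻¹) • MonoidAlgebra.single g⁻¹ (1:R) by
            rw [MonoidAlgebra.smul_single, smul_eq_mul, mul_one], map_smul]
        simp [mul_comm]
      rw [Finset.sum_congr rfl fun g _ => step g,
        Fintype.sum_equiv (Equiv.inv G) _ (fun g => f (MonoidAlgebra.single g (y.coeff g)))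
          (fun g => by simp), ← map_sum]
      congr 1
      ext a
      rw [MonoidAlgebra.coeff_sum, Finsupp.finset_sum_apply]
      simp [MonoidAlgebra.single_apply, Finsupp.single_apply]
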